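/- Let X, Y be Banach spaces and R : X → Y a bounded linear operator. Define on X the equivalent norm |||x||| = ‖x‖_X + ‖Rx‖_Y. Then the bidual norm of (X, |||·|||) is given by |||x**||| = ‖x**‖_{X**} + ‖R** x**‖_{Y**} for every x** ∈ X**. -/

import Mathlib

open Filter Topology NormedSpace

variable {X Y : Type*} [NormedAddCommGroup X] [NormedSpace ℝ X]
  [NormedAddCommGroup Y] [NormedSpace ℝ Y]

/-- The conjugate (dual) operator `R* : Y* → X*` of a bounded operator `R : X → Y`. -/
noncomputable def conjOp (R : X →L[ℝ] Y) : StrongDual ℝ Y →L[ℝ] StrongDual ℝ X :=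
  (ContinuousLinearMap.compL ℝ X Y ℝ).flip R

/-- The biconjugate operator `R** : X** → Y**`. -/
noncomputable def biconjOp (R : X →L[ℝ] Y) : StrongDual ℝ (StrongDual ℝ X) →L[ℝ] StrongDual ℝ (StrongDual ℝ Y) :=
  conjOp (conjOp R)

lemma dual_norm_le_of_forall_le' {W : Type*} [NormedAddCommGroup W] [NormedSpace ℝ W]
    (ψ : StrongDual ℝ W) {c : ℝ}
    (h : ∀ w : W, ‖w‖ ≤ 1 → ψ w ≤ c) : ‖ψ‖ ≤ c := by
  have hc : 0 ≤ c := by simpa using h 0 (by simp)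
  refine ContinuousLinearMap.opNorm_le_bound ψ hc fun w => ?_
  rcases eq_or_ne w 0 with rfl | hw
  · simp
  have hwn : (0:ℝ) < ‖w‖ := norm_pos_iff.2 hw
  have hball : ‖(‖w‖⁻¹ • w)‖ ≤ 1 := by
    rw [norm_smul, norm_inv, norm_norm]
    exact le_of_eq (inv_mul_cancel₀ hwn.ne')
  have h1 : ψ (‖w‖⁻¹ • w) ≤ c := h _ hball
  have h2 : ψ (-(‖w‖⁻¹ • w)) ≤ c := h _ (by simpa using hball)
  rw [map_smul, smul_eq_mul] at h1
  rw [map_neg, map_smul, smul_eq_mul] at h2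
  have key : ∀ a : ℝ, ‖w‖⁻¹ * a ≤ c → a ≤ c * ‖w‖ := fun a ha => by
    have := mul_le_mul_of_nonneg_left ha hwn.le
    rwa [← mul_assoc, mul_inv_cancel₀ hwn.ne', one_mul, mul_comm] at this
  have habs : |ψ w| ≤ c * ‖w‖ := by
    rw [abs_le]
    exact ⟨by have := key (-(ψ w)) (by rw [mul_neg]; linarith); linarith, key _ h1⟩
  simpa [Real.norm_eq_abs] using habs

lemma norm_le_of_forall_dual_le' {W : Type*} [NormedAddCommGroup W] [NormedSpace ℝ W]
    (x : W) {c : ℝ}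
    (h : ∀ f : StrongDual ℝ W, ‖f‖ ≤ 1 → f x ≤ c) : ‖x‖ ≤ c := by
  have hc : 0 ≤ c := by simpa using h 0 (by simp)
  refine norm_le_dual_bound ℝ x hc fun f => ?_
  rcases eq_or_ne f 0 with rfl | hf
  · simp
  have hfn : (0:ℝ) < ‖f‖ := norm_pos_iff.2 hf
  have hball : ‖(‖f‖⁻¹ • f)‖ ≤ 1 := by
    rw [norm_smul, norm_inv, norm_norm]
    exact le_of_eq (inv_mul_cancel₀ hfn.ne')
  have h1 : (‖f‖⁻¹ • f) x ≤ c := h _ hball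
  have h2 : (-(‖f‖⁻¹ • f)) x ≤ c := h _ (by simpa using hball)
  rw [ContinuousLinearMap.smul_apply, smul_eq_mul] at h1
  rw [ContinuousLinearMap.neg_apply, ContinuousLinearMap.smul_apply, smul_eq_mul] at h2
  have key : ∀ a : ℝ, ‖f‖⁻¹ * a ≤ c → a ≤ c * ‖f‖ := fun a ha => by
    have := mul_le_mul_of_nonneg_left ha hfn.le
    rwa [← mul_assoc, mul_inv_cancel₀ hfn.ne', one_mul, mul_comm] at this
  have habs : |f x| ≤ c * ‖f‖ := by
    rw [abs_le]
    exact ⟨by have := key (-(f x)) (by rw [mul_neg]; linarith); linarith, key _ h1⟩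
  simpa [Real.norm_eq_abs] using habs

lemma mem_rhs_iff (R : X →L[ℝ] Y) (φ : StrongDual ℝ (StrongDual ℝ X)) :
    ‖φ‖ + ‖biconjOp R φ‖ ≤ 1 ↔
      ∀ (f : StrongDual ℝ X) (g : StrongDual ℝ Y), ‖f‖ ≤ 1 → ‖g‖ ≤ 1 →
        φ f + φ (conjOp R g) ≤ 1 := by
  constructor
  · intro h f g hf hg
    have h1 : φ f ≤ ‖φ‖ :=
      (le_abs_self _).trans (by
        have := φ.le_opNorm f
        rw [Real.norm_eq_abs] at this
        exact this.trans (mul_le_of_le_one_right (norm_nonneg _) hf))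
    have h2 : φ (conjOp R g) ≤ ‖biconjOp R φ‖ := by
      have : φ (conjOp R g) = biconjOp R φ g := rfl
      rw [this]
      refine (le_abs_self _).trans ?_
      have hle := (biconjOp R φ).le_opNorm g
      rw [Real.norm_eq_abs] at hle
      exact hle.trans (mul_le_of_le_one_right (norm_nonneg _) hg)
    linarith
  · intro h
    have h1 : ∀ g : StrongDual ℝ Y, ‖g‖ ≤ 1 → φ (conjOp R g) ≤ 1 - ‖φ‖ := by
      intro g hg
      have := dual_norm_le_of_forall_le' φ (c := 1 - φ (conjOp R g))
        (fun f hf => by linarith [h f g hf hg])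
      linarith
    have h2 : ‖biconjOp R φ‖ ≤ 1 - ‖φ‖ :=
      dual_norm_le_of_forall_le' _ (fun g hg => h1 g hg)
    linarith

lemma isClosed_rhs (R : X →L[ℝ] Y) :
    IsClosed {φ : WeakDual ℝ (StrongDual ℝ X) | ‖WeakDual.toStrongDual φ‖ +
      ‖biconjOp R (WeakDual.toStrongDual φ)‖ ≤ 1} := by
  have : {φ : WeakDual ℝ (StrongDual ℝ X) | ‖WeakDual.toStrongDual φ‖ +
      ‖biconjOp R (WeakDual.toStrongDual φ)‖ ≤ 1} =
      ⋂ (f : StrongDual ℝ X) (g : StrongDual ℝ Y) (_ : ‖f‖ ≤ 1) (_ : ‖g‖ ≤ 1),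
        {φ : WeakDual ℝ (StrongDual ℝ X) | φ f + φ (conjOp R g) ≤ 1} := by
    ext φ
    simp only [Set.mem_setOf_eq, Set.mem_iInter]
    exact mem_rhs_iff R (WeakDual.toStrongDual φ)
  rw [this]
  refine isClosed_iInter fun f => isClosed_iInter fun g =>
    isClosed_iInter fun _ => isClosed_iInter fun _ => ?_
  exact isClosed_le ((WeakDual.eval_continuous f).add
    (WeakDual.eval_continuous (conjOp R g))) continuous_const

lemma exists_eval_rep' {W : Type*} [NormedAddCommGroup W] [NormedSpace ℝ W]
    (ℓ : WeakDual ℝ W →L[ℝ] ℝ) :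
    ∃ f : W, ∀ ψ : WeakDual ℝ W, ℓ ψ = ψ f := by
  have hb := LinearMap.hasBasis_weakBilin (topDualPairing ℝ W)
  have h0 : ℓ ⁻¹' Metric.ball 0 1 ∈ 𝓝 (0 : WeakDual ℝ W) := by
    have hball : Metric.ball (0 : ℝ) 1 ∈ 𝓝 (ℓ 0) := by
      rw [map_zero]; exact Metric.ball_mem_nhds 0 one_pos
    exact ℓ.continuous.continuousAt.preimage_mem_nhds hball
  obtain ⟨U, hU, hUsub⟩ := hb.mem_iff.1 h0
  obtain ⟨t, r, hr, rfl⟩ := (SeminormFamily.basisSets_iff _).1 hU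
  set B := topDualPairing ℝ W with hB
  have hker : ⨅ i : t, LinearMap.ker (B.flip (i : W)) ≤
      LinearMap.ker (show StrongDual ℝ W →ₗ[ℝ] ℝ from ℓ.toLinearMap) := by
    intro ψ hψ
    rw [Submodule.mem_iInf] at hψ
    have hz : ∀ cc : ℝ, |ℓ (cc • ψ)| < 1 := by
      intro cc
      have hmem : (cc • ψ) ∈ id ((t.sup B.toSeminormFamily).ball 0 r) := by
        rw [id, Seminorm.mem_ball_zero]
        refine Seminorm.finset_sup_apply_lt hr fun i hi => ?_
        have hzero : B ψ (i : W) = 0 := hψ ⟨i, hi⟩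
        rw [LinearMap.toSeminormFamily_apply, map_smul, LinearMap.smul_apply, hzero]
        simpa using hr
      have := hUsub hmem
      have h' : ℓ (cc • ψ) ∈ Metric.ball (0:ℝ) 1 := this
      rwa [Metric.mem_ball, dist_zero_right, Real.norm_eq_abs] at h'
    change ℓ ψ = 0
    show ℓ ψ = 0
    by_contra hne
    have h2 : |ℓ ((2 * (ℓ ψ)⁻¹) • ψ)| < 1 := hz _
    have e : ℓ ((2 * (ℓ ψ)⁻¹) • ψ) = (2 * (ℓ ψ)⁻¹) * ℓ ψ := ℓ.map_smul (2 * (ℓ ψ)⁻¹) ψ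
    rw [e, mul_assoc, inv_mul_cancel₀ hne, mul_one] at h2
    norm_num at h2
  have hsp : (show StrongDual ℝ W →ₗ[ℝ] ℝ from ℓ.toLinearMap) ∈
      Submodule.span ℝ (Set.range fun i : t => B.flip (i : W)) :=
    mem_span_of_iInf_ker_le_ker hker
  obtain ⟨cf, hcf⟩ := (Submodule.mem_span_range_iff_exists_fun ℝ).1 hsp
  refine ⟨∑ i ∈ t.attach, cf i • (i : W), fun ψ => ?_⟩
  have h := LinearMap.congr_fun hcf ψ
  simp only [LinearMap.coe_sum, Finset.sum_apply, LinearMap.smul_apply,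
    LinearMap.flip_apply, topDualPairing_apply, smul_eq_mul,
    ContinuousLinearMap.coe_coe] at h
  rw [map_sum, ← Finset.univ_eq_attach]
  simp only [map_smul, smul_eq_mul]
  refine (show ℓ ψ = _ from h.symm).trans ?_
  exact (Finset.sum_apply ψ Finset.univ (fun i => ⇑(cf i • B.flip ↑i))).trans (Finset.sum_congr rfl fun i _ => rfl)

instance (W : Type*) [NormedAddCommGroup W] [NormedSpace ℝ W] :
    LocallyConvexSpace ℝ (WeakDual ℝ W) :=
  WeakBilin.locallyConvexSpace (B := topDualPairing ℝ W)

lemma mem_S_of_le_on_unitBall (R : X →L[ℝ] Y) (h : StrongDual ℝ X)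
    (hh : ∀ x : X, ‖x‖ + ‖R x‖ ≤ 1 → h x ≤ 1) :
    ∃ (f : StrongDual ℝ X) (g : StrongDual ℝ Y), ‖f‖ ≤ 1 ∧ ‖g‖ ≤ 1 ∧ h = f + conjOp R g := by
  classical
  set cwl : WeakDual ℝ Y →ₗ[ℝ] WeakDual ℝ X :=
    (WeakDual.toStrongDual.symm.toLinearMap.comp
      ((conjOp R).toLinearMap.comp WeakDual.toStrongDual.toLinearMap)) with hcwl
  set M : WeakDual ℝ X × WeakDual ℝ Y →ₗ[ℝ] WeakDual ℝ X :=
    (LinearMap.fst ℝ _ _) + cwl.comp (LinearMap.snd ℝ _ _) with hM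
  have hMapp : ∀ (p : WeakDual ℝ X × WeakDual ℝ Y) (x : X),
      (M p) x = p.1 x + p.2 (R x) := fun p x => rfl
  set K₁ : Set (WeakDual ℝ X) := WeakDual.toStrongDual ⁻¹' Metric.closedBall 0 1 with hK₁
  set K₂ : Set (WeakDual ℝ Y) := WeakDual.toStrongDual ⁻¹' Metric.closedBall 0 1 with hK₂
  set S : Set (WeakDual ℝ X) := M '' (K₁ ×ˢ K₂) with hS
  by_contra hn
  have hhn : (WeakDual.toStrongDual.symm h : WeakDual ℝ X) ∉ S := by
    rintro ⟨⟨f, g⟩, ⟨hf, hg⟩, heq⟩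
    refine hn ⟨WeakDual.toStrongDual f, WeakDual.toStrongDual g, ?_, ?_, ?_⟩
    · rw [hK₁] at hf; simpa [mem_closedBall_zero_iff] using hf
    · rw [hK₂] at hg; simpa [mem_closedBall_zero_iff] using hg
    · have := congrArg WeakDual.toStrongDual heq
      ext x
      have hx := congrFun (congrArg (DFunLike.coe) heq) x
      simpa [hMapp, conjOp] using hx.symm
  have hScompact : IsCompact S := by
    refine IsCompact.image_of_continuousOn
      ((WeakDual.isCompact_closedBall (𝕜 := ℝ) (E := X) 0 1).prod (WeakDual.isCompact_closedBall (𝕜 := ℝ) (E := Y) 0 1)) ?_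
    refine Continuous.continuousOn ?_
    apply WeakDual.continuous_of_continuous_eval
    intro x
    have : (fun p : WeakDual ℝ X × WeakDual ℝ Y => (M p) x)
        = fun p => p.1 x + p.2 (R x) := by ext p; exact hMapp p x
    rw [this]
    exact ((WeakDual.eval_continuous x).comp continuous_fst).add
      ((WeakDual.eval_continuous (R x)).comp continuous_snd)
  have hSconv : Convex ℝ S := by
    refine Convex.linear_image ?_ M
    exact Convex.prod
      (Convex.linear_preimage (convex_closedBall 0 1) _)
      (Convex.linear_preimage (convex_closedBall 0 1) _)
  obtain ⟨ℓ, u, hlt, hgt⟩ :=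
    geometric_hahn_banach_closed_point hSconv hScompact.isClosed hhn
  obtain ⟨x₀, hx₀⟩ := exists_eval_rep' ℓ
  have h0S : (0 : WeakDual ℝ X) ∈ S :=
    ⟨((0, 0) : WeakDual ℝ X × WeakDual ℝ Y), ⟨by simp [hK₁, mem_closedBall_zero_iff], by simp [hK₂, mem_closedBall_zero_iff]⟩,
      map_zero M⟩
  have hu0 : 0 < u := by
    have := hlt 0 h0S
    rwa [map_zero] at this
  -- evaluations of elements of S at x₀ are < u
  have hSeval : ∀ (f : StrongDual ℝ X) (g : StrongDual ℝ Y), ‖f‖ ≤ 1 → ‖g‖ ≤ 1 →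
      f x₀ + g (R x₀) < u := by
    intro f g hf hg
    have hmem : M (WeakDual.toStrongDual.symm f, WeakDual.toStrongDual.symm g) ∈ S :=
      ⟨_, ⟨by simpa [hK₁, mem_closedBall_zero_iff] using hf,
        by simpa [hK₂, mem_closedBall_zero_iff] using hg⟩, rfl⟩
    have := hlt _ hmem
    rw [hx₀] at this
    simpa [hMapp] using this
  set x' : X := u⁻¹ • x₀ with hx'
  have hx'eval : ∀ (f : StrongDual ℝ X) (g : StrongDual ℝ Y), ‖f‖ ≤ 1 → ‖g‖ ≤ 1 →
      f x' + g (R x') ≤ 1 := by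
    intro f g hf hg
    have h1 := (hSeval f g hf hg).le
    have : f x' + g (R x') = u⁻¹ * (f x₀ + g (R x₀)) := by
      simp [hx', map_smul, mul_add, smul_eq_mul]
    rw [this]
    calc u⁻¹ * (f x₀ + g (R x₀)) ≤ u⁻¹ * u :=
          mul_le_mul_of_nonneg_left h1 (inv_nonneg.2 hu0.le)
      _ = 1 := inv_mul_cancel₀ hu0.ne'
  have hnx' : ∀ g : StrongDual ℝ Y, ‖g‖ ≤ 1 → ‖x'‖ ≤ 1 - g (R x') := by
    intro g hg
    exact norm_le_of_forall_dual_le' x' (fun f hf => by linarith [hx'eval f g hf hg])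
  have hnRx' : ‖R x'‖ ≤ 1 - ‖x'‖ :=
    norm_le_of_forall_dual_le' (R x') (fun g hg => by linarith [hnx' g hg])
  have hball : ‖x'‖ + ‖R x'‖ ≤ 1 := by linarith
  have hle := hh x' hball
  have hgt' : u < h x₀ := by
    have := hgt
    rw [hx₀] at this
    exact this
  have : (1 : ℝ) < h x' := by
    have : h x' = u⁻¹ * h x₀ := by simp [hx', map_smul, smul_eq_mul]
    rw [this]
    calc (1:ℝ) = u⁻¹ * u := (inv_mul_cancel₀ hu0.ne').symm
      _ < u⁻¹ * h x₀ := by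
          exact mul_lt_mul_of_pos_left hgt' (inv_pos.2 hu0)
  linarith

/-- Let `X, Y` be Banach spaces, `R : X → Y` a bounded operator, and equip `X` with the
equivalent norm `|||x||| = ‖x‖ + ‖Rx‖`.  Then the bidual norm on `X**` is
`|||x**||| = ‖x**‖ + ‖R** x**‖`.  By Goldstine's theorem this is expressed by saying
that the weak*-closure in `X**` of the canonical image of the `|||·|||`-unit ball
`B = {x : ‖x‖ + ‖Rx‖ ≤ 1}` is exactly `{x** : ‖x**‖ + ‖R** x**‖ ≤ 1}`. -/
theorem bidual_norm_of_sum_renorming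
    [CompleteSpace X] [CompleteSpace Y] (R : X →L[ℝ] Y) :
    closure {φ : WeakDual ℝ (StrongDual ℝ X) | ∃ x : X, ‖x‖ + ‖R x‖ ≤ 1 ∧
        φ = StrongDual.toWeakDual (inclusionInDoubleDual ℝ X x)} =
      {φ : WeakDual ℝ (StrongDual ℝ X) | ‖WeakDual.toStrongDual φ‖ +
        ‖biconjOp R (WeakDual.toStrongDual φ)‖ ≤ 1} := by
  set C : Set (WeakDual ℝ (StrongDual ℝ X)) := {φ | ∃ x : X, ‖x‖ + ‖R x‖ ≤ 1 ∧
    φ = StrongDual.toWeakDual (inclusionInDoubleDual ℝ X x)} with hC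
  apply Set.Subset.antisymm
  · refine closure_minimal ?_ (isClosed_rhs R)
    rintro φ ⟨x, hx, rfl⟩
    show ‖WeakDual.toStrongDual (StrongDual.toWeakDual (inclusionInDoubleDual ℝ X x))‖ +
      ‖biconjOp R (WeakDual.toStrongDual (StrongDual.toWeakDual (inclusionInDoubleDual ℝ X x)))‖ ≤ 1
    have h1 : WeakDual.toStrongDual (StrongDual.toWeakDual (inclusionInDoubleDual ℝ X x)) =
        inclusionInDoubleDual ℝ X x := rfl
    rw [h1]
    have h2 : biconjOp R (inclusionInDoubleDual ℝ X x) =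
        inclusionInDoubleDual ℝ Y (R x) := rfl
    rw [h2]
    have h3 : ‖inclusionInDoubleDual ℝ X x‖ = ‖x‖ :=
      (NormedSpace.inclusionInDoubleDualLi ℝ (E := X)).norm_map x
    have h4 : ‖inclusionInDoubleDual ℝ Y (R x)‖ = ‖R x‖ :=
      (NormedSpace.inclusionInDoubleDualLi ℝ (E := Y)).norm_map (R x)
    rw [h3, h4]
    exact hx
  · intro φ hφ
    by_contra hcl
    have hCconv : Convex ℝ C := by
      rintro φ₁ ⟨x₁, hx₁, rfl⟩ φ₂ ⟨x₂, hx₂, rfl⟩ a b ha hb hab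
      refine ⟨a • x₁ + b • x₂, ?_, ?_⟩
      · have n1 : ‖a • x₁ + b • x₂‖ ≤ a * ‖x₁‖ + b * ‖x₂‖ := by
          refine (norm_add_le _ _).trans ?_
          rw [norm_smul, norm_smul, Real.norm_eq_abs, Real.norm_eq_abs,
            abs_of_nonneg ha, abs_of_nonneg hb]
        have n2 : ‖R (a • x₁ + b • x₂)‖ ≤ a * ‖R x₁‖ + b * ‖R x₂‖ := by
          rw [map_add, map_smul, map_smul]
          refine (norm_add_le _ _).trans ?_
          rw [norm_smul, norm_smul, Real.norm_eq_abs, Real.norm_eq_abs,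
            abs_of_nonneg ha, abs_of_nonneg hb]
        nlinarith [norm_nonneg x₁, norm_nonneg x₂, norm_nonneg (R x₁), norm_nonneg (R x₂)]
      · simp [map_add, map_smul]
    obtain ⟨ℓ, u, hlt, hgt⟩ :=
      geometric_hahn_banach_closed_point hCconv.closure isClosed_closure hcl
    obtain ⟨f, hf⟩ := exists_eval_rep' ℓ
    have h0C : (0 : WeakDual ℝ (StrongDual ℝ X)) ∈ C :=
      ⟨0, by simp, by simp⟩
    have hu0 : 0 < u := by
      have := hlt 0 (subset_closure h0C)
      rwa [map_zero] at this
    have hfx : ∀ x : X, ‖x‖ + ‖R x‖ ≤ 1 → f x < u := by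
      intro x hx
      have hmem : (StrongDual.toWeakDual (inclusionInDoubleDual ℝ X x)) ∈ C := ⟨x, hx, rfl⟩
      have := hlt _ (subset_closure hmem)
      rw [hf] at this
      exact this
    set h : StrongDual ℝ X := u⁻¹ • f with hh
    have hhle : ∀ x : X, ‖x‖ + ‖R x‖ ≤ 1 → h x ≤ 1 := by
      intro x hx
      have : h x = u⁻¹ * f x := rfl
      rw [this]
      calc u⁻¹ * f x ≤ u⁻¹ * u :=
            mul_le_mul_of_nonneg_left (hfx x hx).le (inv_nonneg.2 hu0.le)
        _ = 1 := inv_mul_cancel₀ hu0.ne'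
    obtain ⟨f₁, g₁, hf₁, hg₁, heq⟩ := mem_S_of_le_on_unitBall R h hhle
    have hb1 := (mem_rhs_iff R (WeakDual.toStrongDual φ)).1 hφ f₁ g₁ hf₁ hg₁
    have hφh : WeakDual.toStrongDual φ h = WeakDual.toStrongDual φ f₁ +
        WeakDual.toStrongDual φ (conjOp R g₁) := by
      rw [heq, map_add]
    have hφf : u < WeakDual.toStrongDual φ f := by
      have := hgt
      rw [hf] at this
      exact this
    have : (1 : ℝ) < WeakDual.toStrongDual φ h := by
      have hrw : WeakDual.toStrongDual φ h = u⁻¹ * WeakDual.toStrongDual φ f := by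
        rw [hh, map_smul, smul_eq_mul]
      rw [hrw]
      calc (1:ℝ) = u⁻¹ * u := (inv_mul_cancel₀ hu0.ne').symm
        _ < u⁻¹ * WeakDual.toStrongDual φ f := mul_lt_mul_of_pos_left hφf (inv_pos.2 hu0)
    linarith [hb1, hφh ▸ this]
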